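/- For nonnegative integers r, s, m, the sum over j from 0 to m of C(r+j, j) * C(s+j, j) equals the sum over k of C(r, k) * C(s, k) * C(r+s+1+m-k, r+s+1). (Double Hockey-Stick identity) -/

import Mathlib

open Finset

/-- Vandermonde in range form. -/
lemma vdm_range (x y n : ℕ) :
    (x + y).choose n = ∑ a ∈ range (n + 1), x.choose a * y.choose (n - a) := by
  rw [Nat.add_choose_eq, Finset.Nat.sum_antidiagonal_eq_sum_range_succ_mk]

/-- Diagonal Vandermonde. -/
lemma vdm_diag (x y n : ℕ) (h : x ≤ n) :
    ∑ k ∈ range (n + 1), x.choose k * y.choose k = (x + y).choose x := by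
  have h1 : ∑ k ∈ range (x + 1), x.choose k * y.choose k = (x + y).choose x := by
    rw [vdm_range x y x, ← Finset.sum_range_reflect]
    simp only [Nat.add_sub_cancel]
    refine Finset.sum_congr rfl fun k hk => ?_
    simp only [mem_range] at hk
    have hk' : k ≤ x := by omega
    have h2 : x - (x - k) = k := by omega
    rw [Nat.choose_symm hk']
  rw [← h1]
  symm
  apply Finset.sum_subset
  · intro a ha; simp only [mem_range] at *; omega
  · intro a _ ha
    simp only [mem_range] at ha
    have : x < a := by omega
    rw [Nat.choose_eq_zero_of_lt this, Nat.zero_mul]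

/-- Trinomial revision, universal in ℕ. -/
lemma tri (n k a : ℕ) : n.choose k * (n - k).choose a = n.choose (k + a) * (k + a).choose k := by
  by_cases h : k + a ≤ n
  · rw [Nat.choose_mul (Nat.le_add_right k a), Nat.add_sub_cancel_left]
  · rw [Nat.choose_eq_zero_of_lt (by omega : n < k + a), Nat.zero_mul]
    by_cases hk : k ≤ n
    · rw [Nat.choose_eq_zero_of_lt (by omega : n - k < a), Nat.mul_zero]
    · rw [Nat.choose_eq_zero_of_lt (by omega : n < k), Nat.zero_mul]

lemma tri2 (n k a : ℕ) : n.choose k * (n - k).choose a = n.choose a * (n - a).choose k := by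
  rw [tri n k a, tri n a k, Nat.add_comm a k]
  congr 1
  have : k + a - k = a := by omega
  rw [← Nat.choose_symm (Nat.le_add_right k a), this]

/-- Surányi's identity. -/
lemma suranyi (r s p : ℕ) :
    ∑ k ∈ range (r + 1), r.choose k * s.choose k * (r + s + p - k).choose (r + s) =
      (r + p).choose p * (s + p).choose p := by
  have step1 : ∀ k ∈ range (r + 1),
      r.choose k * s.choose k * (r + s + p - k).choose (r + s) =
      ∑ a ∈ range (r + s + 1),
        r.choose k * s.choose k * ((r - k).choose a * (s + p).choose (r + s - a)) := by
    intro k hk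
    simp only [mem_range] at hk
    have h1 : r + s + p - k = (r - k) + (s + p) := by omega
    rw [h1, vdm_range, Finset.mul_sum]
  rw [Finset.sum_congr rfl step1, Finset.sum_comm]
  have step2 : ∀ a ∈ range (r + s + 1),
      ∑ k ∈ range (r + 1),
        r.choose k * s.choose k * ((r - k).choose a * (s + p).choose (r + s - a)) =
      r.choose a * ((r - a) + s).choose (r - a) * (s + p).choose (r + s - a) := by
    intro a _
    have h1 : ∀ k, r.choose k * s.choose k * ((r - k).choose a * (s + p).choose (r + s - a)) =
        r.choose a * ((r - a).choose k * s.choose k) * (s + p).choose (r + s - a) := by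
      intro k
      have h0 := tri2 r k a
      calc r.choose k * s.choose k * ((r - k).choose a * (s + p).choose (r + s - a))
          = (r.choose k * (r - k).choose a) * (s.choose k * (s + p).choose (r + s - a)) := by
            ring
        _ = (r.choose a * (r - a).choose k) * (s.choose k * (s + p).choose (r + s - a)) := by
            rw [h0]
        _ = _ := by ring
    simp only [h1, ← Finset.sum_mul, ← Finset.mul_sum]
    rw [vdm_diag (r - a) s r (by omega)]
  rw [Finset.sum_congr rfl step2]
  -- restrict to range (r+1)
  have step3 : ∑ a ∈ range (r + s + 1),
      r.choose a * ((r - a) + s).choose (r - a) * (s + p).choose (r + s - a) =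
      ∑ a ∈ range (r + 1),
      r.choose a * ((r - a) + s).choose (r - a) * (s + p).choose (r + s - a) := by
    symm
    apply Finset.sum_subset
    · intro a ha; simp only [mem_range] at *; omega
    · intro a _ ha
      simp only [mem_range] at ha
      rw [Nat.choose_eq_zero_of_lt (by omega : r < a), Nat.zero_mul, Nat.zero_mul]
  rw [step3, ← Finset.sum_range_reflect]
  simp only [Nat.add_sub_cancel]
  have step4 : ∀ b ∈ range (r + 1),
      r.choose (r - b) * ((r - (r - b)) + s).choose (r - (r - b)) *
        (s + p).choose (r + s - (r - b)) =
      (s + p).choose s * (r.choose b * p.choose b) := by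
    intro b hb
    simp only [mem_range] at hb
    have hb' : b ≤ r := by omega
    have h1 : r - (r - b) = b := by omega
    have h2 : r + s - (r - b) = s + b := by omega
    rw [h1, h2, Nat.choose_symm hb']
    -- now : r.choose b * (b + s).choose b * (s + p).choose (s + b)
    have h3 : (s + p).choose (s + b) * (s + b).choose s = (s + p).choose s * p.choose b := by
      by_cases h : b ≤ p
      · rw [Nat.choose_mul (Nat.le_add_right s b)]
        congr 2 <;> omega
      · rw [Nat.choose_eq_zero_of_lt (by omega : s + p < s + b), Nat.zero_mul,
          Nat.choose_eq_zero_of_lt (by omega : p < b), Nat.mul_zero]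
    have h4 : (b + s).choose b = (s + b).choose s := by
      rw [Nat.add_comm b s, Nat.choose_symm_add]
    rw [h4]
    calc r.choose b * (s + b).choose s * (s + p).choose (s + b)
        = r.choose b * ((s + p).choose (s + b) * (s + b).choose s) := by ring
      _ = r.choose b * ((s + p).choose s * p.choose b) := by rw [h3]
      _ = (s + p).choose s * (r.choose b * p.choose b) := by ring
  rw [Finset.sum_congr rfl step4, ← Finset.mul_sum, vdm_diag r p r (le_refl r),
    Nat.choose_symm_add, Nat.choose_symm_add]
  ring

/-- Double Hockey-Stick identity. -/
theorem double_hockey_stick (r s m : ℕ) :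
    ∑ j ∈ Finset.range (m + 1), (r + j).choose j * (s + j).choose j =
      ∑ k ∈ Finset.range (r + 1),
        r.choose k * s.choose k * (r + s + 1 + m - k).choose (r + s + 1) := by
  induction m with
  | zero =>
    rw [Finset.sum_range_one]
    symm
    rw [Finset.sum_eq_single_of_mem 0 (by simp)]
    · simp
    · intro k hk hk0
      simp only [mem_range] at hk
      rw [Nat.choose_eq_zero_of_lt (by omega : r + s + 1 + 0 - k < r + s + 1), Nat.mul_zero]
  | succ m ih =>
    rw [Finset.sum_range_succ, ih]
    have step : ∀ k ∈ range (r + 1),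
        r.choose k * s.choose k * (r + s + 1 + (m + 1) - k).choose (r + s + 1) =
        r.choose k * s.choose k * (r + s + 1 + m - k).choose (r + s + 1) +
        r.choose k * s.choose k * (r + s + (m + 1) - k).choose (r + s) := by
      intro k hk
      simp only [mem_range] at hk
      have h1 : r + s + 1 + (m + 1) - k = (r + s + 1 + m - k) + 1 := by omega
      rw [h1, Nat.choose_succ_succ (r + s + 1 + m - k) (r + s)]
      have h2 : r + s + (m + 1) - k = r + s + 1 + m - k := by omega
      rw [h2, Nat.mul_add]
      ring
    rw [Finset.sum_congr rfl step, Finset.sum_add_distrib, suranyi r s (m + 1)]
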